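/- arXiv:2505.08371 — 3 statements merged into one kernel-verified Lean document; each statement's English description precedes it below -/
import Mathlib

section
/- Let μ₁, μ₂ ∈ ℝ, α₁, α₂ > 0, and β₁, β₂ > 0 with β₁ < β₂. Then the ratio x ↦ φ(x; μ₁, α₁, β₁)/φ(x; μ₂, α₂, β₂) of generalized normal densities tends to +∞ as x → +∞ and tends to +∞ as x → −∞. -/
open Filter

/-- The generalized normal density with location `μ`, scale `α`, and shape `β`:
`φ(x; μ, α, β) = (β / (2 α Γ(1/β))) * exp (-(|x - μ| / α) ^ β)`. -/
noncomputable def gnpdf (μ α β x : ℝ) : ℝ :=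
  β / (2 * α * Real.Gamma (1 / β)) * Real.exp (-((|x - μ| / α) ^ β))

/-- For `0 < p < q` and positive constants, `c₂ t^q - c₁ t^p → ∞`. -/
lemma aux_poly_diff (c₁ c₂ p q : ℝ) (hc₁ : 0 < c₁) (hc₂ : 0 < c₂)
    (hp : 0 < p) (hpq : p < q) :
    Tendsto (fun t : ℝ => c₂ * t ^ q - c₁ * t ^ p) atTop atTop := by
  have h0 : Tendsto (fun t : ℝ => c₂ * t ^ (q - p) - c₁) atTop atTop := by
    have := tendsto_atTop_add_const_right atTop (-c₁)
      ((tendsto_rpow_atTop (show (0:ℝ) < q - p by linarith)).const_mul_atTop hc₂)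
    exact this.congr fun t => by ring
  have h1 : Tendsto (fun t : ℝ => t ^ p * (c₂ * t ^ (q - p) - c₁)) atTop atTop :=
    (tendsto_rpow_atTop hp).atTop_mul_atTop₀ h0
  refine h1.congr' ?_
  filter_upwards [eventually_gt_atTop 0] with t ht
  rw [mul_sub, ← mul_assoc, mul_comm (t ^ p) c₂, mul_assoc, ← Real.rpow_add ht,
    add_sub_cancel, mul_comm (t ^ p) c₁]

/-- The exponent difference tends to `∞` at `+∞`. -/
lemma aux_exponent (μ₁ μ₂ α₁ α₂ β₁ β₂ : ℝ) (hα₁ : 0 < α₁) (hα₂ : 0 < α₂)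
    (hβ₁ : 0 < β₁) (hβ₂ : 0 < β₂) (hβ : β₁ < β₂) :
    Tendsto (fun x => (|x - μ₂| / α₂) ^ β₂ - (|x - μ₁| / α₁) ^ β₁) atTop atTop := by
  set c₁ : ℝ := (2 / α₁) ^ β₁ with hc₁def
  set c₂ : ℝ := (1 / α₂) ^ β₂ with hc₂def
  have hc₁ : 0 < c₁ := Real.rpow_pos_of_pos (by positivity) _
  have hc₂ : 0 < c₂ := Real.rpow_pos_of_pos (by positivity) _
  have hmain := (aux_poly_diff c₁ c₂ β₁ β₂ hc₁ hc₂ hβ₁ hβ).comp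
    (tendsto_atTop_add_const_right atTop (-μ₂) tendsto_id)
  refine tendsto_atTop_mono' _ ?_ hmain
  filter_upwards [eventually_ge_atTop (max (2 * μ₂ - μ₁) (max μ₁ (μ₂ + 1)))] with x hx
  have hx1 : μ₁ ≤ x := le_trans (le_max_left _ _) (le_trans (le_max_right _ _) hx)
  have hx2 : μ₂ + 1 ≤ x := le_trans (le_max_right _ _) (le_trans (le_max_right _ _) hx)
  have hx3 : 2 * μ₂ - μ₁ ≤ x := le_trans (le_max_left _ _) hx
  have ht : (0:ℝ) < x - μ₂ := by linarith
  have h1 : |x - μ₁| = x - μ₁ := abs_of_nonneg (by linarith)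
  have h2 : |x - μ₂| = x - μ₂ := abs_of_nonneg ht.le
  simp only [Function.comp, id_eq]
  rw [h1, h2, show x + -μ₂ = x - μ₂ by ring]
  have e2 : ((x - μ₂) / α₂) ^ β₂ = c₂ * (x - μ₂) ^ β₂ := by
    rw [div_eq_mul_inv, Real.mul_rpow ht.le (inv_nonneg.mpr hα₂.le), hc₂def, one_div, mul_comm]
  have e1 : ((x - μ₁) / α₁) ^ β₁ ≤ c₁ * (x - μ₂) ^ β₁ := by
    have hle : (x - μ₁) / α₁ ≤ 2 / α₁ * (x - μ₂) := by
      rw [div_mul_eq_mul_div]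
      gcongr
      linarith
    calc ((x - μ₁) / α₁) ^ β₁ ≤ (2 / α₁ * (x - μ₂)) ^ β₁ :=
          Real.rpow_le_rpow (div_nonneg (by linarith) hα₁.le) hle hβ₁.le
      _ = c₁ * (x - μ₂) ^ β₁ := Real.mul_rpow (div_nonneg (by norm_num) hα₁.le) ht.le
  rw [e2]
  linarith

lemma aux_atTop (μ₁ μ₂ α₁ α₂ β₁ β₂ : ℝ) (hα₁ : 0 < α₁) (hα₂ : 0 < α₂)
    (hβ₁ : 0 < β₁) (hβ₂ : 0 < β₂) (hβ : β₁ < β₂) :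
    Tendsto (fun x => gnpdf μ₁ α₁ β₁ x / gnpdf μ₂ α₂ β₂ x) atTop atTop := by
  have hΓ₁ : 0 < Real.Gamma (1 / β₁) := Real.Gamma_pos_of_pos (by positivity)
  have hΓ₂ : 0 < Real.Gamma (1 / β₂) := Real.Gamma_pos_of_pos (by positivity)
  set C₁ : ℝ := β₁ / (2 * α₁ * Real.Gamma (1 / β₁)) with hC₁
  set C₂ : ℝ := β₂ / (2 * α₂ * Real.Gamma (1 / β₂)) with hC₂
  have hC₁pos : 0 < C₁ := by rw [hC₁]; positivity
  have hC₂pos : 0 < C₂ := by rw [hC₂]; positivity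
  have key : ∀ x, gnpdf μ₁ α₁ β₁ x / gnpdf μ₂ α₂ β₂ x =
      C₁ / C₂ * Real.exp ((|x - μ₂| / α₂) ^ β₂ - (|x - μ₁| / α₁) ^ β₁) := by
    intro x
    unfold gnpdf
    rw [← hC₁, ← hC₂, mul_div_mul_comm, ← Real.exp_sub]
    ring_nf
  have := (Real.tendsto_exp_atTop.comp
      (aux_exponent μ₁ μ₂ α₁ α₂ β₁ β₂ hα₁ hα₂ hβ₁ hβ₂ hβ)).const_mul_atTop
      (div_pos hC₁pos hC₂pos)
  exact this.congr fun x => (key x).symm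

/-- If `β₁ < β₂`, the ratio of generalized normal densities
`x ↦ φ(x; μ₁, α₁, β₁) / φ(x; μ₂, α₂, β₂)` tends to `+∞` in both tails. -/
theorem gnpdf_ratio_tendsto_atTop_of_shape_lt
    (μ₁ μ₂ α₁ α₂ β₁ β₂ : ℝ) (hα₁ : 0 < α₁) (hα₂ : 0 < α₂)
    (hβ₁ : 0 < β₁) (hβ₂ : 0 < β₂) (hβ : β₁ < β₂) :
    Tendsto (fun x => gnpdf μ₁ α₁ β₁ x / gnpdf μ₂ α₂ β₂ x) atTop atTop ∧
    Tendsto (fun x => gnpdf μ₁ α₁ β₁ x / gnpdf μ₂ α₂ β₂ x) atBot atTop := by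
  constructor
  · exact aux_atTop μ₁ μ₂ α₁ α₂ β₁ β₂ hα₁ hα₂ hβ₁ hβ₂ hβ
  · have hneg : ∀ μ α β (x : ℝ), gnpdf μ α β (-x) = gnpdf (-μ) α β x := by
      intro μ α β x
      unfold gnpdf
      congr 2
      rw [show -x - μ = -(x + μ) by ring, abs_neg, show x - -μ = x + μ by ring]
    have h := (aux_atTop (-μ₁) (-μ₂) α₁ α₂ β₁ β₂ hα₁ hα₂ hβ₁ hβ₂ hβ).comp
      tendsto_neg_atBot_atTop
    refine h.congr fun x => ?_
    simp only [Function.comp, hneg, neg_neg]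
end

section
/- Let μ₁, μ₂ ∈ ℝ, β > 0, and α₁ > α₂ > 0. Then the ratio x ↦ φ(x; μ₁, α₁, β)/φ(x; μ₂, α₂, β) of generalized normal densities with common shape β tends to +∞ as x → +∞ and tends to +∞ as x → −∞. -/
open Filter

lemma gnpdf_aux_tendsto (β α₁ α₂ d : ℝ) (hβ : 0 < β) (hα₂ : 0 < α₂) (hα : α₂ < α₁)
    (hd : 0 ≤ d) :
    Tendsto (fun t : ℝ => (t / α₂) ^ β - ((t + d) / α₁) ^ β) atTop atTop := by
  have hα₁ : 0 < α₁ := hα₂.trans hα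
  set c : ℝ := (α₂ / α₁) ^ β with hc
  have hc0 : 0 < c := Real.rpow_pos_of_pos (by positivity) β
  have hc1 : c < 1 := Real.rpow_lt_one (by positivity) (by rw [div_lt_one hα₁]; exact hα) hβ
  have h0 : Tendsto (fun t : ℝ => (t + d) / t) atTop (nhds 1) := by
    have hdiv : Tendsto (fun t : ℝ => d / t) atTop (nhds 0) :=
      tendsto_const_nhds.div_atTop tendsto_id
    have := (tendsto_const_nhds (x := (1:ℝ)) (f := atTop)).add hdiv
    rw [add_zero] at this
    refine this.congr' ?_
    filter_upwards [eventually_gt_atTop (0:ℝ)] with t ht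
    field_simp
  have h1 : Tendsto (fun t : ℝ => ((t + d) / t) ^ β) atTop (nhds 1) := by
    have := h0.rpow_const (p := β) (Or.inr hβ.le)
    rwa [Real.one_rpow] at this
  have hlt : (1 : ℝ) < (1 + c) / (2 * c) := by
    rw [lt_div_iff₀ (by positivity)]; linarith
  have h2 : ∀ᶠ t in atTop, ((t + d) / t) ^ β ≤ (1 + c) / (2 * c) :=
    h1.eventually_le_const hlt
  have h3 : Tendsto (fun t : ℝ => (t / α₂) ^ β * ((1 - c) / 2)) atTop atTop := by
    apply Tendsto.atTop_mul_const (by linarith)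
    exact (tendsto_rpow_atTop hβ).comp (tendsto_id.atTop_div_const hα₂)
  refine tendsto_atTop_mono' _ ?_ h3
  filter_upwards [h2, eventually_gt_atTop (0:ℝ)] with t h2t ht
  have hsplit : ((t + d) / α₁) ^ β = ((t + d) / t) ^ β * c * (t / α₂) ^ β := by
    rw [hc, ← Real.mul_rpow (by positivity) (by positivity),
      ← Real.mul_rpow (by positivity) (by positivity)]
    congr 1
    field_simp
  rw [hsplit]
  have hpos : (0:ℝ) ≤ (t / α₂) ^ β := Real.rpow_nonneg (by positivity) β
  have : ((t + d) / t) ^ β * c ≤ (1 + c) / 2 := by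
    calc ((t + d) / t) ^ β * c ≤ ((1 + c) / (2 * c)) * c :=
          mul_le_mul_of_nonneg_right h2t hc0.le
      _ = (1 + c) / 2 := by field_simp
  nlinarith [mul_le_mul_of_nonneg_right this hpos]

/-- With common shape `β > 0` and scales `α₁ > α₂ > 0`, the ratio
`x ↦ φ(x; μ₁, α₁, β) / φ(x; μ₂, α₂, β)` tends to `+∞` in both tails. -/
theorem gnpdf_ratio_tendsto_atTop_of_scale_gt
    (μ₁ μ₂ β α₁ α₂ : ℝ) (hβ : 0 < β) (hα₂ : 0 < α₂) (hα : α₂ < α₁) :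
    Tendsto (fun x => gnpdf μ₁ α₁ β x / gnpdf μ₂ α₂ β x) atTop atTop ∧
    Tendsto (fun x => gnpdf μ₁ α₁ β x / gnpdf μ₂ α₂ β x) atBot atTop := by
  have hα₁ : 0 < α₁ := hα₂.trans hα
  have hΓ : 0 < Real.Gamma (1 / β) := Real.Gamma_pos_of_pos (by positivity)
  set d : ℝ := |μ₁ - μ₂| with hdd
  have hd : 0 ≤ d := abs_nonneg _
  -- ratio equals (α₂/α₁) * exp(B - A)
  have hratio : ∀ x, gnpdf μ₁ α₁ β x / gnpdf μ₂ α₂ β x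
      = (α₂ / α₁) * Real.exp ((|x - μ₂| / α₂) ^ β - (|x - μ₁| / α₁) ^ β) := by
    intro x
    rw [gnpdf, gnpdf, Real.exp_sub, Real.exp_neg, Real.exp_neg]
    field_simp
  -- lower bound for exponent
  have key : ∀ x : ℝ, (|x - μ₂| / α₂) ^ β - ((|x - μ₂| + d) / α₁) ^ β
      ≤ (|x - μ₂| / α₂) ^ β - (|x - μ₁| / α₁) ^ β := by
    intro x
    have h1 : |x - μ₁| ≤ |x - μ₂| + d := by
      rw [hdd]
      calc |x - μ₁| = |(x - μ₂) + (μ₂ - μ₁)| := by rw [sub_add_sub_cancel]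
        _ ≤ |x - μ₂| + |μ₂ - μ₁| := abs_add_le _ _
        _ = |x - μ₂| + |μ₁ - μ₂| := by rw [abs_sub_comm μ₂ μ₁]
    have : (|x - μ₁| / α₁) ^ β ≤ ((|x - μ₂| + d) / α₁) ^ β :=
      Real.rpow_le_rpow (by positivity) (by gcongr) hβ.le
    linarith
  have habsTop : Tendsto (fun x : ℝ => |x - μ₂|) atTop atTop :=
    tendsto_abs_atTop_atTop.comp (tendsto_atTop_add_const_right _ _ tendsto_id)
  have habsBot : Tendsto (fun x : ℝ => |x - μ₂|) atBot atTop :=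
    tendsto_abs_atBot_atTop.comp (tendsto_atBot_add_const_right _ _ tendsto_id)
  have haux := gnpdf_aux_tendsto β α₁ α₂ d hβ hα₂ hα hd
  have hexpTop : Tendsto (fun x => (|x - μ₂| / α₂) ^ β - (|x - μ₁| / α₁) ^ β) atTop atTop :=
    tendsto_atTop_mono key (haux.comp habsTop)
  have hexpBot : Tendsto (fun x => (|x - μ₂| / α₂) ^ β - (|x - μ₁| / α₁) ^ β) atBot atTop :=
    tendsto_atTop_mono key (haux.comp habsBot)
  constructor <;> [skip; skip] <;>
  · simp only [hratio]
    first
    | exact (Real.tendsto_exp_atTop.comp hexpTop).const_mul_atTop (by positivity)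
    | exact (Real.tendsto_exp_atTop.comp hexpBot).const_mul_atTop (by positivity)
end

section
/- Let μ₁, μ₂ ∈ ℝ, α₁, α₂ > 0, and β₁, β₂ > 0, and suppose that either β₁ ≠ β₂, or β₁ = β₂ and α₁ ≠ α₂. Then the density ratio r(x) = φ(x; μ₁, α₁, β₁)/φ(x; μ₂, α₂, β₂) is non-monotonic: there exist points x₀ < x₁ < x₂ such that (r(x₀) − r(x₁)) · (r(x₁) − r(x₂)) < 0. -/
open Filter

private lemma tendsto_diff_rpow_atTop (a b p q m n : ℝ) (ha : 0 < a) (hb : 0 < b)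
    (hp : 0 < p) (hq : 0 < q) (h : p < q ∨ (p = q ∧ a < b)) :
    Tendsto (fun x => b * |x - n| ^ q - a * |x - m| ^ p) atTop atTop := by
  have hbt : Tendsto (fun x : ℝ => (x - m) ^ p) atTop atTop := by
    apply (tendsto_rpow_atTop hp).comp
    simpa [sub_eq_add_neg] using tendsto_atTop_add_const_right atTop (-m) tendsto_id
  rcases h with hpq | ⟨rfl, hab⟩
  · -- p < q
    set K : ℝ := (2 ^ p * (a + 1) / b) ^ (q - p)⁻¹ with hKdef
    have hbase : (0:ℝ) < 2 ^ p * (a + 1) / b := by positivity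
    have hK0 : 0 ≤ K := (Real.rpow_pos_of_pos hbase _).le
    have hKq : K ^ (q - p) = 2 ^ p * (a + 1) / b :=
      Real.rpow_inv_rpow hbase.le (by linarith)
    have hev : ∀ᶠ x in atTop,
        (x - m) ^ p ≤ b * |x - n| ^ q - a * |x - m| ^ p := by
      filter_upwards [eventually_ge_atTop (m + 1), eventually_ge_atTop (2 * n - m),
        eventually_ge_atTop (n + K), eventually_ge_atTop (n + 1)] with x h1 h2 h3 h4
      have hxm : (1:ℝ) ≤ x - m := by linarith
      have hxn0 : (0:ℝ) < x - n := by linarith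
      have hxn2 : (x - m) / 2 ≤ x - n := by linarith
      rw [abs_of_nonneg (by linarith : (0:ℝ) ≤ x - m), abs_of_pos hxn0]
      have hsplit : (x - n) ^ q = (x - n) ^ p * (x - n) ^ (q - p) := by
        rw [← Real.rpow_add hxn0]; ring_nf
      have h5 : ((x - m) / 2) ^ p ≤ (x - n) ^ p :=
        Real.rpow_le_rpow (by positivity) hxn2 hp.le
      have h6 : 2 ^ p * (a + 1) / b ≤ (x - n) ^ (q - p) := by
        rw [← hKq]
        exact Real.rpow_le_rpow hK0 (by linarith) (by linarith)
      have hdp : ((x - m) / 2) ^ p = (x - m) ^ p / 2 ^ p :=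
        Real.div_rpow (by linarith) (by norm_num) p
      have h2p : (0:ℝ) < 2 ^ p := by positivity
      have hxmp : (0:ℝ) ≤ (x - m) ^ p := Real.rpow_nonneg (by linarith) _
      have hxnp : (0:ℝ) ≤ (x - n) ^ p := Real.rpow_nonneg hxn0.le _
      have h7 : (a + 1) * (x - m) ^ p ≤ b * (x - n) ^ q := by
        rw [hsplit]
        calc (a + 1) * (x - m) ^ p
            = b * ((x - m) ^ p / 2 ^ p) * (2 ^ p * (a + 1) / b) := by
              field_simp
          _ ≤ b * (x - n) ^ p * (2 ^ p * (a + 1) / b) := by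
              apply mul_le_mul_of_nonneg_right _ hbase.le
              rw [← hdp]
              exact mul_le_mul_of_nonneg_left h5 hb.le
          _ ≤ b * (x - n) ^ p * ((x - n) ^ (q - p)) := by
              apply mul_le_mul_of_nonneg_left h6 (by positivity)
          _ = b * ((x - n) ^ p * (x - n) ^ (q - p)) := by ring
      linarith
    exact tendsto_atTop_mono' _ hev hbt
  · -- p = q, a < b
    set θ : ℝ := ((a + b) / (2 * b)) ^ p⁻¹ with hθdef
    have hfrac : (0:ℝ) < (a + b) / (2 * b) := by positivity
    have hθ0 : 0 < θ := Real.rpow_pos_of_pos hfrac _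
    have hθ1 : θ < 1 :=
      Real.rpow_lt_one hfrac.le (by rw [div_lt_one (by positivity)]; linarith) (by positivity)
    have hθp : θ ^ p = (a + b) / (2 * b) := Real.rpow_inv_rpow hfrac.le hp.ne'
    have hev : ∀ᶠ x in atTop,
        ((b - a) / 2) * (x - m) ^ p ≤ b * |x - n| ^ p - a * |x - m| ^ p := by
      filter_upwards [eventually_ge_atTop (m + 1),
        eventually_ge_atTop ((n - θ * m) / (1 - θ))] with x h1 h2
      have hxm : (0:ℝ) ≤ x - m := by linarith
      have hx2 : n - θ * m ≤ x * (1 - θ) := (div_le_iff₀ (by linarith)).mp h2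
      have hxn : θ * (x - m) ≤ x - n := by nlinarith
      rw [abs_of_nonneg hxm, abs_of_nonneg (le_trans (by positivity) hxn)]
      have h5 : (θ * (x - m)) ^ p ≤ (x - n) ^ p :=
        Real.rpow_le_rpow (by positivity) hxn hp.le
      rw [Real.mul_rpow hθ0.le hxm, hθp] at h5
      have h6 : b * ((a + b) / (2 * b) * (x - m) ^ p) ≤ b * (x - n) ^ p :=
        mul_le_mul_of_nonneg_left h5 hb.le
      have h7 : b * ((a + b) / (2 * b) * (x - m) ^ p) = ((a + b) / 2) * (x - m) ^ p := by
        field_simp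
      rw [h7] at h6
      linarith
    exact tendsto_atTop_mono' _ hev (hbt.const_mul_atTop (by linarith))
private lemma tendsto_diff_rpow_atBot (a b p q m n : ℝ) (ha : 0 < a) (hb : 0 < b)
    (hp : 0 < p) (hq : 0 < q) (h : p < q ∨ (p = q ∧ a < b)) :
    Tendsto (fun x => b * |x - n| ^ q - a * |x - m| ^ p) atBot atTop := by
  have h1 := (tendsto_diff_rpow_atTop a b p q (-m) (-n) ha hb hp hq h).comp
    tendsto_neg_atBot_atTop
  have heq : (fun x : ℝ => b * |(-x) - (-n)| ^ q - a * |(-x) - (-m)| ^ p)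
      = fun x => b * |x - n| ^ q - a * |x - m| ^ p := by
    funext x
    rw [show (-x) - (-n) = -(x - n) by ring, show (-x) - (-m) = -(x - m) by ring,
      abs_neg, abs_neg]
  rw [← heq]
  exact h1

private lemma gnpdf_pos' (μ α β x : ℝ) (hα : 0 < α) (hβ : 0 < β) : 0 < gnpdf μ α β x := by
  unfold gnpdf
  have hΓ := Real.Gamma_pos_of_pos (show 0 < 1 / β by positivity)
  positivity

/-- If two generalized normal densities differ in shape, or have equal
shape but different scales, then their ratio is non-monotonic. -/
theorem gnpdf_ratio_nonMonotonic_of_shape_or_scale_ne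
    (μ₁ μ₂ α₁ α₂ β₁ β₂ : ℝ) (hα₁ : 0 < α₁) (hα₂ : 0 < α₂)
    (hβ₁ : 0 < β₁) (hβ₂ : 0 < β₂)
    (hne : β₁ ≠ β₂ ∨ (β₁ = β₂ ∧ α₁ ≠ α₂))
    (r : ℝ → ℝ) (hr : ∀ x, r x = gnpdf μ₁ α₁ β₁ x / gnpdf μ₂ α₂ β₂ x) :
    ∃ x₀ x₁ x₂ : ℝ, x₀ < x₁ ∧ x₁ < x₂ ∧ (r x₀ - r x₁) * (r x₁ - r x₂) < 0 := by
  set a : ℝ := α₁ ^ (-β₁) with haa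
  set b : ℝ := α₂ ^ (-β₂) with hbb
  have ha : 0 < a := Real.rpow_pos_of_pos hα₁ _
  have hb : 0 < b := Real.rpow_pos_of_pos hα₂ _
  set g : ℝ → ℝ := fun x => b * |x - μ₂| ^ β₂ - a * |x - μ₁| ^ β₁ with hg
  set C : ℝ := (β₁ / (2 * α₁ * Real.Gamma (1 / β₁))) / (β₂ / (2 * α₂ * Real.Gamma (1 / β₂)))
    with hC
  have hC0 : 0 < C := by
    have h1 := Real.Gamma_pos_of_pos (show 0 < 1 / β₁ by positivity)
    have h2 := Real.Gamma_pos_of_pos (show 0 < 1 / β₂ by positivity)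
    rw [hC]; positivity
  have hrg : r = fun x => C * Real.exp (g x) := by
    funext x
    rw [hr, gnpdf, gnpdf, mul_div_mul_comm, ← Real.exp_sub]
    congr 1
    rw [Real.div_rpow (abs_nonneg _) hα₁.le, Real.div_rpow (abs_nonneg _) hα₂.le]
    simp only [hg, haa, hbb, Real.rpow_neg hα₁.le, Real.rpow_neg hα₂.le]
    ring
  have hr0 : 0 < r 0 := by
    rw [hr]
    exact div_pos (gnpdf_pos' _ _ _ _ hα₁ hβ₁) (gnpdf_pos' _ _ _ _ hα₂ hβ₂)
  have hcase : (β₁ < β₂ ∨ (β₁ = β₂ ∧ a < b)) ∨ (β₂ < β₁ ∨ (β₂ = β₁ ∧ b < a)) := by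
    rcases hne with h | ⟨h, hαne⟩
    · rcases lt_or_gt_of_ne h with h' | h'
      · exact Or.inl (Or.inl h')
      · exact Or.inr (Or.inl h')
    · subst h
      rcases lt_or_gt_of_ne hαne with h' | h'
      · -- α₁ < α₂ ⇒ b < a
        right; right
        refine ⟨rfl, ?_⟩
        rw [haa, hbb, Real.rpow_neg hα₁.le, Real.rpow_neg hα₂.le]
        exact inv_strictAnti₀ (Real.rpow_pos_of_pos hα₁ _)
          (Real.rpow_lt_rpow hα₁.le h' hβ₁)
      · -- α₂ < α₁ ⇒ a < b
        left; right
        refine ⟨rfl, ?_⟩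
        rw [haa, hbb, Real.rpow_neg hα₁.le, Real.rpow_neg hα₂.le]
        exact inv_strictAnti₀ (Real.rpow_pos_of_pos hα₂ _)
          (Real.rpow_lt_rpow hα₂.le h' hβ₁)
  have key : ((∀ᶠ x in atTop, r 0 < r x) ∧ (∀ᶠ x in atBot, r 0 < r x)) ∨
      ((∀ᶠ x in atTop, r x < r 0) ∧ (∀ᶠ x in atBot, r x < r 0)) := by
    rcases hcase with hcond | hcond
    · -- g → +∞ at both tails, so r → +∞ at both tails
      have hgT : Tendsto g atTop atTop :=
        tendsto_diff_rpow_atTop a b β₁ β₂ μ₁ μ₂ ha hb hβ₁ hβ₂ hcond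
      have hgB : Tendsto g atBot atTop :=
        tendsto_diff_rpow_atBot a b β₁ β₂ μ₁ μ₂ ha hb hβ₁ hβ₂ hcond
      have hrT : Tendsto r atTop atTop := by
        rw [hrg]; exact (Real.tendsto_exp_atTop.comp hgT).const_mul_atTop hC0
      have hrB : Tendsto r atBot atTop := by
        rw [hrg]; exact (Real.tendsto_exp_atTop.comp hgB).const_mul_atTop hC0
      exact Or.inl ⟨hrT.eventually_gt_atTop (r 0), hrB.eventually_gt_atTop (r 0)⟩
    · -- -g → +∞ at both tails, so r → 0 at both tails
      have hconds : β₂ < β₁ ∨ (β₂ = β₁ ∧ b < a) := hcond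
      have hgT : Tendsto (fun x => a * |x - μ₁| ^ β₁ - b * |x - μ₂| ^ β₂) atTop atTop :=
        tendsto_diff_rpow_atTop b a β₂ β₁ μ₂ μ₁ hb ha hβ₂ hβ₁ hconds
      have hgB : Tendsto (fun x => a * |x - μ₁| ^ β₁ - b * |x - μ₂| ^ β₂) atBot atTop :=
        tendsto_diff_rpow_atBot b a β₂ β₁ μ₂ μ₁ hb ha hβ₂ hβ₁ hconds
      have heq : r = (fun x => C * ((Real.exp
          (a * |x - μ₁| ^ β₁ - b * |x - μ₂| ^ β₂)))⁻¹) := by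
        rw [hrg]
        funext x
        rw [← Real.exp_neg]
        congr 2
        simp only [hg]
        ring
      have hrT : Tendsto r atTop (nhds 0) := by
        rw [heq]
        have := (Real.tendsto_exp_atTop.comp hgT).inv_tendsto_atTop
        simpa using this.const_mul C
      have hrB : Tendsto r atBot (nhds 0) := by
        rw [heq]
        have := (Real.tendsto_exp_atTop.comp hgB).inv_tendsto_atTop
        simpa using this.const_mul C
      exact Or.inr ⟨hrT.eventually_lt_const hr0, hrB.eventually_lt_const hr0⟩
  rcases key with ⟨hT, hB⟩ | ⟨hT, hB⟩
  · obtain ⟨x₂, hx₂, hrx₂⟩ := ((eventually_gt_atTop (0:ℝ)).and hT).exists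
    obtain ⟨x₀, hx₀, hrx₀⟩ := ((eventually_lt_atBot (0:ℝ)).and hB).exists
    exact ⟨x₀, 0, x₂, hx₀, hx₂, mul_neg_of_pos_of_neg (by linarith) (by linarith)⟩
  · obtain ⟨x₂, hx₂, hrx₂⟩ := ((eventually_gt_atTop (0:ℝ)).and hT).exists
    obtain ⟨x₀, hx₀, hrx₀⟩ := ((eventually_lt_atBot (0:ℝ)).and hB).exists
    exact ⟨x₀, 0, x₂, hx₀, hx₂, mul_neg_of_neg_of_pos (by linarith) (by linarith)⟩
end
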